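/- Let 𝓜 = { mfi(minidx(P), i) : i ∈ [1,n] }. If [ℓ, r] ∈ 𝓜 with [ℓ, r] ≠ [-∞,∞], and there is no interval [ℓ', r'] ∈ 𝓜 with [ℓ', r'] ⊊ [ℓ, r], then [ℓ, r] is a minimal occurrence interval for P over T. -/

import Mathlib

/-- Ordered binary trees (possibly empty). -/
inductive BTree : Type
  | nil : BTree
  | node : BTree → BTree → BTree
  deriving DecidableEq

/-- The minimum value of a list of integers (with default `0` for the empty list). -/
noncomputable def minval (l : List ℤ) : ℤ := l.minimum.untopD 0

/-- The 0-based index of the leftmost occurrence of the minimum value. -/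
noncomputable def minidx0 (l : List ℤ) : ℕ := l.idxOf (minval l)

theorem minidx0_lt_length {l : List ℤ} (h : l ≠ []) : minidx0 l < l.length := by
  obtain ⟨a, ha⟩ := WithTop.ne_top_iff_exists.mp (List.minimum_ne_top_of_ne_nil h)
  have hmem : a ∈ l := List.minimum_mem ha.symm
  have hval : minval l = a := by simp [minval, ← ha]
  rw [minidx0, hval]
  exact List.idxOf_lt_length_iff.mpr hmem

/-- The Cartesian tree of a string of integers. -/
noncomputable def CT (l : List ℤ) : BTree :=
  if h : l = [] then .nil
  else .node (CT (l.take (minidx0 l))) (CT (l.drop (minidx0 l + 1)))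
termination_by l.length
decreasing_by
  · have := minidx0_lt_length h
    simp [List.length_take]
    omega
  · have : 0 < l.length := List.length_pos_iff.mpr h
    simp [List.length_drop]
    omega

/-- The value of the 1-based position `i` of the string `T` (default `0`). -/
def val (T : List ℤ) (i : ℕ) : ℤ := T.getD (i - 1) 0

/-- `IsSubSeq n m I` : `I` is a strictly increasing sequence of `m` subscripts in `[1, n]`. -/
def IsSubSeq (n m : ℕ) (I : List ℕ) : Prop :=
  I.length = m ∧ I.Pairwise (· < ·) ∧ ∀ j ∈ I, 1 ≤ j ∧ j ≤ n

/-- The subsequence `T_I` of `T` selected by the (1-based) subscript sequence `I`. -/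
def seqAt (T : List ℤ) (I : List ℕ) : List ℤ := I.map (val T)

/-- The substring `P[a..b]` of `P` (1-based, inclusive). -/
def subslice (P : List ℤ) (a b : ℕ) : List ℤ := (P.take b).drop (a - 1)

/-- The left end of the maximal interval around position `v` in which `P[v]` is minimal:
one plus the rightmost position `j < v` carrying a value smaller than `P[v]` (or `1`). -/
def leftEnd (P : List ℤ) (v : ℕ) : ℕ :=
  (((Finset.Icc 1 (v - 1)).filter (fun j => val P j < val P v)).max.unbotD 0) + 1

/-- The right end of the maximal interval around position `v` in which `P[v]` is minimal:
the leftmost position `j > v` carrying a value smaller than `P[v]`, minus one (or `|P|`). -/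
def rightEnd (P : List ℤ) (v : ℕ) : ℕ :=
  (((Finset.Icc (v + 1) P.length).filter (fun j => val P j < val P v)).min.untopD
    (P.length + 1)) - 1

/-- `P_v`: the substring of `P` spanned by the subtree of `CT(P)` rooted at node `v`
(nodes are identified with 1-based positions of `P`). -/
def Psub (P : List ℤ) (v : ℕ) : List ℤ := subslice P (leftEnd P v) (rightEnd P v)

/-- The left child `v.L` of node `v` in `CT(P)` (as a 1-based position), if it exists. -/
noncomputable def leftChild (P : List ℤ) (v : ℕ) : Option ℕ :=
  if leftEnd P v < v then some (leftEnd P v + minidx0 (subslice P (leftEnd P v) (v - 1)))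
  else none

/-- The right child `v.R` of node `v` in `CT(P)` (as a 1-based position), if it exists. -/
noncomputable def rightChild (P : List ℤ) (v : ℕ) : Option ℕ :=
  if v < rightEnd P v then some (v + 1 + minidx0 (subslice P (v + 1) (rightEnd P v)))
  else none

/-- `[ℓ, r]` is a fixed-interval with pivot `(v, i)`. -/
def IsFixedInterval (T P : List ℤ) (v i ℓ r : ℕ) : Prop :=
  1 ≤ ℓ ∧ r ≤ T.length ∧
    ∃ I : List ℕ, IsSubSeq T.length (Psub P v).length I ∧ i ∈ I ∧
      (∀ j ∈ I, ℓ ≤ j ∧ j ≤ r) ∧ CT (seqAt T I) = CT (Psub P v) ∧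
      val T i = minval (seqAt T I)

/-- `IntervalSsubset (ℓ', r') (ℓ, r)` : the interval `[ℓ', r']` is strictly contained
in the interval `[ℓ, r]`. -/
def IntervalSsubset (p q : ℕ × ℕ) : Prop := q.1 ≤ p.1 ∧ p.2 ≤ q.2 ∧ p ≠ q

/-- `[ℓ, r]` is a minimal fixed-interval with pivot `(v, i)`. -/
def IsMinFixedInterval (T P : List ℤ) (v i ℓ r : ℕ) : Prop :=
  IsFixedInterval T P v i ℓ r ∧
    ¬∃ ℓ' r', IsFixedInterval T P v i ℓ' r' ∧ IntervalSsubset (ℓ', r') (ℓ, r)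

open Classical in
/-- The left endpoint `L(v, i)` of the minimal fixed-interval `mfi(v, i)`,
which is `-∞` (i.e. `⊥`) if no (minimal) fixed-interval with pivot `(v, i)` exists. -/
noncomputable def mfiL (T P : List ℤ) (v i : ℕ) : WithBot ℕ :=
  if h : ∃ ℓ r, IsMinFixedInterval T P v i ℓ r then (h.choose : WithBot ℕ) else ⊥

open Classical in
/-- The right endpoint `R(v, i)` of the minimal fixed-interval `mfi(v, i)`,
which is `∞` (i.e. `⊤`) if no (minimal) fixed-interval with pivot `(v, i)` exists. -/
noncomputable def mfiR (T P : List ℤ) (v i : ℕ) : WithTop ℕ :=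
  if h : ∃ ℓ r, IsMinFixedInterval T P v i ℓ r then (h.choose_spec.choose : WithTop ℕ) else ⊤

/-- `I` is a trace of pattern `P` in text `T`. -/
def IsTrace (T P : List ℤ) (I : List ℕ) : Prop :=
  IsSubSeq T.length P.length I ∧ CT (seqAt T I) = CT P

/-- `[ℓ, r]` is an occurrence interval for `P` over `T`. -/
def IsOccInterval (T P : List ℤ) (ℓ r : ℕ) : Prop :=
  1 ≤ ℓ ∧ r ≤ T.length ∧ ∃ I, IsTrace T P I ∧ ∀ j ∈ I, ℓ ≤ j ∧ j ≤ r

/-- `[ℓ, r]` is a minimal occurrence interval for `P` over `T`. -/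
def IsMinOccInterval (T P : List ℤ) (ℓ r : ℕ) : Prop :=
  IsOccInterval T P ℓ r ∧
    ¬∃ ℓ' r', IsOccInterval T P ℓ' r' ∧ IntervalSsubset (ℓ', r') (ℓ, r)



lemma minval_mem {l : List ℤ} (h : l ≠ []) : minval l ∈ l := by
  obtain ⟨a, ha⟩ := WithTop.ne_top_iff_exists.mp (List.minimum_ne_top_of_ne_nil h)
  have hmem : a ∈ l := List.minimum_mem ha.symm
  have hv : minval l = a := by simp [minval, ← ha]
  rwa [hv]

lemma minval_le_of_mem {l : List ℤ} {x : ℤ} (hx : x ∈ l) : minval l ≤ x := by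
  have h1 := List.minimum_le_of_mem' hx
  obtain ⟨a, ha⟩ := WithTop.ne_top_iff_exists.mp
    (List.minimum_ne_top_of_ne_nil (List.ne_nil_of_mem hx))
  rw [← ha] at h1
  have h2 : minval l = a := by simp [minval, ← ha]
  rw [h2]; exact_mod_cast h1

lemma val_root (P : List ℤ) (hm : P ≠ []) : val P (minidx0 P + 1) = minval P := by
  have hlt := minidx0_lt_length hm
  have : minval P ∈ P := minval_mem hm
  simp only [val, Nat.add_sub_cancel]
  rw [List.getD_eq_getElem _ _ hlt]
  simp [minidx0]

lemma Psub_root (P : List ℤ) (hm : P ≠ []) : Psub P (minidx0 P + 1) = P := by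
  have hlt := minidx0_lt_length hm
  have hmemle : ∀ j, 1 ≤ j → j ≤ P.length → ¬ (val P j < val P (minidx0 P + 1)) := by
    intro j h1 h2
    rw [val_root P hm]
    have hjlt : j - 1 < P.length := by omega
    have : val P j = P[j-1] := by simp [val, List.getElem?_eq_getElem hjlt]
    rw [this]
    exact not_lt.mpr (minval_le_of_mem (List.getElem_mem hjlt))
  have hL : leftEnd P (minidx0 P + 1) = 1 := by
    have : (Finset.Icc 1 (minidx0 P)).filter
        (fun j => val P j < val P (minidx0 P + 1)) = ∅ := by
      rw [Finset.filter_eq_empty_iff]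
      intro j hj
      simp only [Finset.mem_Icc] at hj
      exact hmemle j hj.1 (by omega)
    simp [leftEnd, this]
  have hR : rightEnd P (minidx0 P + 1) = P.length := by
    have : (Finset.Icc (minidx0 P + 1 + 1) P.length).filter
        (fun j => val P j < val P (minidx0 P + 1)) = ∅ := by
      rw [Finset.filter_eq_empty_iff]
      intro j hj
      simp only [Finset.mem_Icc] at hj
      exact hmemle j (by omega) hj.2
    simp [rightEnd, this]
  simp [Psub, hL, hR, subslice]

lemma fixed_to_occ {T P : List ℤ} (hm : P ≠ []) {i ℓ r : ℕ}
    (h : IsFixedInterval T P (minidx0 P + 1) i ℓ r) : IsOccInterval T P ℓ r := by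
  obtain ⟨h1, h2, I, hsub, _, hb, hct, _⟩ := h
  rw [Psub_root P hm] at hsub hct
  exact ⟨h1, h2, I, ⟨hsub, hct⟩, hb⟩

lemma occ_to_fixed {T P : List ℤ} (hm : P ≠ []) {ℓ r : ℕ}
    (h : IsOccInterval T P ℓ r) :
    ∃ i, 1 ≤ i ∧ i ≤ T.length ∧ IsFixedInterval T P (minidx0 P + 1) i ℓ r := by
  obtain ⟨h1, h2, I, ⟨hsub, hct⟩, hb⟩ := h
  have hIne : I ≠ [] := by
    intro hc
    have := hsub.1
    rw [hc] at this
    simp at this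
    exact hm (List.length_eq_zero_iff.mp this.symm)
  have hne : seqAt T I ≠ [] := by simpa [seqAt] using hIne
  have hmem := minval_mem hne
  simp only [seqAt, List.mem_map] at hmem
  obtain ⟨i, hiI, hval⟩ := hmem
  refine ⟨i, (hsub.2.2 i hiI).1, (hsub.2.2 i hiI).2, h1, h2, I, ?_, hiI, hb, ?_, by simpa [seqAt] using hval⟩
  · rw [Psub_root P hm]; exact hsub
  · rw [Psub_root P hm]; exact hct

lemma pivot_mem {T P : List ℤ} {v i ℓ r : ℕ} (h : IsFixedInterval T P v i ℓ r) :
    ℓ ≤ i ∧ i ≤ r := by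
  obtain ⟨_, _, I, _, hiI, hb, _, _⟩ := h
  exact hb i hiI

lemma exists_min_fixed (T P : List ℤ) (v i : ℕ) :
    ∀ n a b, b - a ≤ n → IsFixedInterval T P v i a b →
    ∃ ℓ r, IsMinFixedInterval T P v i ℓ r ∧ a ≤ ℓ ∧ r ≤ b := by
  intro n
  induction n using Nat.strong_induction_on with
  | _ n ih =>
    intro a b hab hf
    by_cases hmin : IsMinFixedInterval T P v i a b
    · exact ⟨a, b, hmin, le_refl _, le_refl _⟩
    · have hex : ∃ ℓ' r', IsFixedInterval T P v i ℓ' r' ∧ IntervalSsubset (ℓ', r') (a, b) := by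
        simp only [IsMinFixedInterval, not_and, not_not] at hmin
        exact hmin hf
      obtain ⟨ℓ', r', hf', h1, h2, h3⟩ := hex
      have hp := pivot_mem hf'
      have hne : ℓ' ≠ a ∨ r' ≠ b := by
        by_contra hc
        push_neg at hc
        exact h3 (by simp [hc.1, hc.2])
      have hlt : r' - ℓ' < b - a := by omega
      obtain ⟨ℓ0, r0, hm0, hl0, hr0⟩ := ih (r' - ℓ') (by omega) ℓ' r' le_rfl hf'
      exact ⟨ℓ0, r0, hm0, by omega, by omega⟩

/-- If `[ℓ, r] ∈ 𝓜 = { mfi(minidx(P), i) : i ∈ [1,n] }` with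
`[ℓ, r] ≠ [-∞,∞]`, and there is no interval `[ℓ', r'] ∈ 𝓜` with `[ℓ', r'] ⊊ [ℓ, r]`, then
`[ℓ, r]` is a minimal occurrence interval for `P` over `T`. -/
theorem mem_M_minimal_is_minimal_occurrence
    (T P : List ℤ) (hT : T.Nodup) (hP : P.Nodup)
    (hm : 1 ≤ P.length) (hmn : P.length ≤ T.length)
    (ℓ r i : ℕ) (hi : 1 ≤ i ∧ i ≤ T.length)
    (h : IsMinFixedInterval T P (minidx0 P + 1) i ℓ r)
    (hmin : ¬∃ i' ℓ' r', 1 ≤ i' ∧ i' ≤ T.length ∧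
        IsMinFixedInterval T P (minidx0 P + 1) i' ℓ' r' ∧
        IntervalSsubset (ℓ', r') (ℓ, r)) :
    IsMinOccInterval T P ℓ r := by
  
  have hPne : P ≠ [] := by
    intro hc; rw [hc] at hm; simp at hm
  obtain ⟨hf, hnss⟩ := h
  constructor
  · exact fixed_to_occ hPne hf
  · rintro ⟨ℓ', r', hocc, hs1, hs2, hs3⟩
    obtain ⟨i', hi1, hi2, hf'⟩ := occ_to_fixed hPne hocc
    obtain ⟨ℓ0, r0, hm0, hl0, hr0⟩ := exists_min_fixed T P _ i' (r' - ℓ') ℓ' r' le_rfl hf'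
    apply hmin
    refine ⟨i', ℓ0, r0, hi1, hi2, hm0, by omega, by omega, ?_⟩
    intro hc
    rw [Prod.mk.injEq] at hc
    apply hs3
    rw [Prod.mk.injEq]
    omega
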